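/- arXiv:1907.01438 — 2 statements merged into one kernel-verified Lean document; each statement's English description precedes it below -/
import Mathlib

section
/- The function m ↦ E(m)/K(m) is strictly decreasing on [0,1), takes the value 1 at m = 0, and tends to 0 as m → 1 from the left. -/
open Real

/-- Complete elliptic integral of the first kind `K(m) = ∫₀^{π/2} dθ/√(1 - m sin²θ)`. -/
noncomputable def ellK (m : ℝ) : ℝ :=
  ∫ θ in (0:ℝ)..(π / 2), 1 / Real.sqrt (1 - m * Real.sin θ ^ 2)

/-- Complete elliptic integral of the second kind `E(m) = ∫₀^{π/2} √(1 - m sin²θ) dθ`. -/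
noncomputable def ellE (m : ℝ) : ℝ :=
  ∫ θ in (0:ℝ)..(π / 2), Real.sqrt (1 - m * Real.sin θ ^ 2)

open intervalIntegral Set Filter

lemma pos_aux {m : ℝ} (hm : m < 1) (θ : ℝ) : 0 < 1 - m * Real.sin θ ^ 2 := by
  rcases le_or_gt m 0 with h | h
  · nlinarith [sq_nonneg (Real.sin θ)]
  · nlinarith [Real.sin_sq_le_one θ]

lemma contE {m : ℝ} : Continuous fun θ => Real.sqrt (1 - m * Real.sin θ ^ 2) :=
  (continuous_const.sub (continuous_const.mul ((Real.continuous_sin).pow 2))).sqrt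

lemma contK {m : ℝ} (hm : m < 1) : Continuous fun θ => 1 / Real.sqrt (1 - m * Real.sin θ ^ 2) :=
  continuous_const.div contE (fun θ => (Real.sqrt_pos.2 (pos_aux hm θ)).ne')

lemma ellK_pos {m : ℝ} (hm : m < 1) : 0 < ellK m := by
  unfold ellK
  apply intervalIntegral.intervalIntegral_pos_of_pos ((contK hm).intervalIntegrable _ _)
  · exact fun x => one_div_pos.2 (Real.sqrt_pos.2 (pos_aux hm x))
  · positivity

lemma ellK_lt {m₁ m₂ : ℝ} (h0 : 0 ≤ m₁) (h12 : m₁ < m₂) (h1 : m₂ < 1) :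
    ellK m₁ < ellK m₂ := by
  unfold ellK
  rw [← sub_pos, ← intervalIntegral.integral_sub ((contK h1).intervalIntegrable _ _)
    ((contK (h12.trans h1)).intervalIntegrable _ _)]
  apply intervalIntegral.intervalIntegral_pos_of_pos_on
  · exact (((contK h1).sub (contK (h12.trans h1))).intervalIntegrable _ _)
  · intro x hx
    have hs : 0 < Real.sin x ^ 2 := by
      have := Real.sin_pos_of_pos_of_lt_pi hx.1 (hx.2.trans (by linarith [Real.pi_pos]))
      positivity
    have p2 := pos_aux h1 x
    have p1 := pos_aux (h12.trans h1) x
    have hlt : 1 - m₂ * Real.sin x ^ 2 < 1 - m₁ * Real.sin x ^ 2 := by nlinarith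
    have := Real.sqrt_lt_sqrt p2.le hlt
    have s2pos := Real.sqrt_pos.2 p2
    have := one_div_lt_one_div_of_lt (Real.sqrt_pos.2 p2) this
    linarith
  · positivity

lemma ellE_lt {m₁ m₂ : ℝ} (h0 : 0 ≤ m₁) (h12 : m₁ < m₂) (h1 : m₂ < 1) :
    ellE m₂ < ellE m₁ := by
  unfold ellE
  rw [← sub_pos, ← intervalIntegral.integral_sub (contE.intervalIntegrable _ _)
    (contE.intervalIntegrable _ _)]
  apply intervalIntegral.intervalIntegral_pos_of_pos_on
  · exact ((contE.sub contE).intervalIntegrable _ _)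
  · intro x hx
    have hs : 0 < Real.sin x ^ 2 := by
      have := Real.sin_pos_of_pos_of_lt_pi hx.1 (hx.2.trans (by linarith [Real.pi_pos]))
      positivity
    have p2 := pos_aux h1 x
    have hlt : 1 - m₂ * Real.sin x ^ 2 < 1 - m₁ * Real.sin x ^ 2 := by nlinarith
    have := Real.sqrt_lt_sqrt p2.le hlt
    linarith
  · positivity

lemma ellE_pos {m : ℝ} (hm : m < 1) : 0 < ellE m := by
  unfold ellE
  apply intervalIntegral.intervalIntegral_pos_of_pos (contE.intervalIntegrable _ _)
  · exact fun x => Real.sqrt_pos.2 (pos_aux hm x)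
  · positivity

lemma ellE_le {m : ℝ} (hm0 : 0 ≤ m) : ellE m ≤ π / 2 := by
  have h : ellE m ≤ ∫ _θ in (0:ℝ)..(π/2), (1:ℝ) := by
    unfold ellE
    apply intervalIntegral.integral_mono_on (by positivity)
      (contE.intervalIntegrable _ _) intervalIntegrable_const
    intro x _hx
    exact Real.sqrt_le_one.2 (by nlinarith [sq_nonneg (Real.sin x)])
  simpa using h

-- pointwise bound: √(1 - m sin²θ) ≤ (π/2 - θ) + √(1-m) on [0, π/2], for 0 ≤ m < 1
lemma sqrt_bound {m : ℝ} (hm0 : 0 ≤ m) (hm1 : m < 1) {θ : ℝ} (hθ : θ ∈ Icc (0:ℝ) (π/2)) :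
    Real.sqrt (1 - m * Real.sin θ ^ 2) ≤ (π/2 - θ) + Real.sqrt (1 - m) := by
  set c := Real.sqrt (1 - m) with hc
  have hc0 : 0 ≤ c := Real.sqrt_nonneg _
  have hcsq : c ^ 2 = 1 - m := Real.sq_sqrt (by linarith)
  have hcos : 0 ≤ Real.cos θ :=
    Real.cos_nonneg_of_mem_Icc ⟨by linarith [hθ.1, Real.pi_pos], hθ.2⟩
  have hcos2 : Real.cos θ ≤ π/2 - θ := by
    have := Real.sin_le (x := π/2 - θ) (by linarith [hθ.2])
    rwa [Real.sin_pi_div_two_sub] at this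
  have step1 : Real.sqrt (1 - m * Real.sin θ ^ 2) ≤ Real.cos θ + c := by
    rw [show Real.cos θ + c = Real.sqrt ((Real.cos θ + c) ^ 2) from
      (Real.sqrt_sq (by positivity)).symm]
    apply Real.sqrt_le_sqrt
    have := Real.sin_sq_add_cos_sq θ
    nlinarith [sq_nonneg (Real.sin θ)]
  linarith

-- the divergent comparison integral
lemma log_int {c : ℝ} (hc : 0 < c) :
    (∫ θ in (0:ℝ)..(π/2), 1 / ((π/2 - θ) + c)) = Real.log ((π/2 + c) / c) := by
  have h1 : (∫ θ in (0:ℝ)..(π/2), (fun x => 1 / (x + c)) (π/2 - θ))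
      = ∫ x in (π/2 - π/2)..(π/2 - 0), (fun x => 1 / (x + c)) x := by
    exact intervalIntegral.integral_comp_sub_left (fun x => 1 / (x + c)) (π/2)
  simp only [sub_self, sub_zero] at h1
  rw [h1]
  have h2 : (∫ x in (0:ℝ)..(π/2), (fun y => 1 / y) (x + c))
      = ∫ y in (0+c)..(π/2+c), (fun y => 1 / y) y := by
    exact intervalIntegral.integral_comp_add_right (fun y => 1 / y) c
  simp only [zero_add] at h2
  rw [h2, integral_one_div]
  intro h
  rcases Set.mem_uIcc.1 h with ⟨h1, _⟩ | ⟨_, h3⟩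
  · linarith
  · nlinarith [Real.pi_pos]

lemma ellK_lower {m : ℝ} (hm0 : 0 ≤ m) (hm1 : m < 1) :
    Real.log ((π/2 + Real.sqrt (1 - m)) / Real.sqrt (1 - m)) ≤ ellK m := by
  unfold ellK
  set c := Real.sqrt (1 - m) with hc
  have hc0 : 0 < c := Real.sqrt_pos.2 (by linarith)
  rw [← log_int hc0]
  have hcont : ContinuousOn (fun θ : ℝ => 1 / ((π/2 - θ) + c)) (Set.uIcc 0 (π/2)) := by
    apply ContinuousOn.div continuousOn_const
    · fun_prop
    · intro x hx
      rw [Set.uIcc_of_le (by positivity)] at hx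
      have := hx.2
      intro h; nlinarith
  apply intervalIntegral.integral_mono_on (by positivity) (hcont.intervalIntegrable)
    ((contK hm1).intervalIntegrable _ _)
  intro x hx
  have h1 := sqrt_bound hm0 hm1 hx
  have h2 : 0 < Real.sqrt (1 - m * Real.sin x ^ 2) := Real.sqrt_pos.2 (pos_aux hm1 x)
  exact one_div_le_one_div_of_le h2 h1

lemma ellK_tendsto_atTop :
    Tendsto ellK (nhdsWithin 1 (Set.Iio 1)) atTop := by
  have hsqrt : Tendsto (fun m : ℝ => Real.sqrt (1 - m)) (nhdsWithin 1 (Set.Iio 1))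
      (nhdsWithin 0 (Set.Ioi 0)) := by
    rw [tendsto_nhdsWithin_iff]
    constructor
    · have h : Tendsto (fun m : ℝ => Real.sqrt (1 - m)) (nhds 1) (nhds (Real.sqrt (1 - 1))) :=
        ((continuous_const.sub continuous_id).sqrt).tendsto 1
      simpa using h.mono_left nhdsWithin_le_nhds
    · filter_upwards [self_mem_nhdsWithin] with m hm
      exact Real.sqrt_pos.2 (by simp only [Set.mem_Iio] at hm; linarith)
  have hf : Tendsto (fun c : ℝ => Real.log ((π/2 + c) / c)) (nhdsWithin 0 (Set.Ioi 0)) atTop := by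
    have h1 : Tendsto (fun c : ℝ => Real.log (π/2 + c)) (nhdsWithin 0 (Set.Ioi 0))
        (nhds (Real.log (π/2))) := by
      have hca : ContinuousAt (fun c : ℝ => Real.log (π/2 + c)) 0 := by
        apply (Real.continuousAt_log (by positivity)).comp
        · fun_prop
      have := hca.tendsto.mono_left (nhdsWithin_le_nhds (s := Set.Ioi (0:ℝ)))
      simpa using this
    have h2 : Tendsto (fun c : ℝ => -Real.log c) (nhdsWithin 0 (Set.Ioi 0)) atTop := by
      rw [tendsto_neg_atTop_iff]
      exact Real.tendsto_log_nhdsGT_zero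
    apply (h1.add_atTop h2).congr'
    filter_upwards [self_mem_nhdsWithin] with c hc
    have hc' : (0:ℝ) < c := hc
    rw [Real.log_div (by positivity) hc'.ne']
    ring
  have hflog := hf.comp hsqrt
  apply tendsto_atTop_mono' _ _ hflog
  filter_upwards [Ioo_mem_nhdsLT_of_mem (show (1:ℝ) ∈ Set.Ioc 0 1 by norm_num)] with m hm
  exact ellK_lower hm.1.le hm.2

/-- **Monotonicity and limits of `E/K`.**  The ratio `m ↦ E(m)/K(m)` is strictly
decreasing on `[0,1)`, equals `1` at `m = 0`, and tends to `0` as `m → 1⁻`. -/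
theorem ellE_div_ellK_strictAnti_value_limit :
    StrictAntiOn (fun m => ellE m / ellK m) (Set.Ico (0:ℝ) 1) ∧
    ellE 0 / ellK 0 = 1 ∧
    Filter.Tendsto (fun m => ellE m / ellK m) (nhdsWithin 1 (Set.Iio 1)) (nhds 0) := by
  refine ⟨?_, ?_, ?_⟩
  · intro a ha b hb hab
    have hKa := ellK_pos ha.2
    have hKb := ellK_pos hb.2
    have hEb := ellE_pos hb.2
    have hE := ellE_lt ha.1 hab hb.2
    have hK := ellK_lt ha.1 hab hb.2
    have h1 : ellE b / ellK b < ellE a / ellK b := by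
      exact div_lt_div_of_pos_right hE hKb
    have h2 : ellE a / ellK b < ellE a / ellK a :=
      div_lt_div_of_pos_left (hEb.trans hE) hKa hK
    exact h1.trans h2
  · have hE0 : ellE 0 = π / 2 := by
      unfold ellE; norm_num
    have hK0 : ellK 0 = π / 2 := by
      unfold ellK; norm_num
    rw [hE0, hK0, div_self (by positivity)]
  · have hK := ellK_tendsto_atTop
    have hupper : Tendsto (fun m => (π/2) / ellK m) (nhdsWithin 1 (Set.Iio 1)) (nhds 0) :=
      Tendsto.div_atTop tendsto_const_nhds hK
    apply tendsto_of_tendsto_of_tendsto_of_le_of_le' tendsto_const_nhds hupper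
    · filter_upwards [Ioo_mem_nhdsLT_of_mem (show (1:ℝ) ∈ Set.Ioc 0 1 by norm_num)] with m hm
      exact div_nonneg (ellE_pos hm.2).le (ellK_pos hm.2).le
    · filter_upwards [Ioo_mem_nhdsLT_of_mem (show (1:ℝ) ∈ Set.Ioc 0 1 by norm_num)] with m hm
      exact div_le_div_of_nonneg_right (ellE_le hm.1.le) (ellK_pos hm.2).le
end

section
/- As m → 1 from the left, K(m) + log(√(1 − m)) tends to log 4; that is, the complete elliptic integral of the first kind satisfies the asymptotic K(m) = −log√(1−m) + log 4 + o(1) as m → 1⁻. -/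
open Real

open Real Set Filter MeasureTheory intervalIntegral

lemma denom_pos {m : ℝ} (hm0 : 0 ≤ m) (hm1 : m < 1) (θ : ℝ) :
    0 < 1 - m * Real.sin θ ^ 2 := by
  nlinarith [Real.sin_sq_le_one θ, sq_nonneg (Real.sin θ)]

lemma cont_div {m : ℝ} (hm0 : 0 ≤ m) (hm1 : m < 1) {g : ℝ → ℝ} (hg : Continuous g) :
    Continuous fun θ => g θ / Real.sqrt (1 - m * Real.sin θ ^ 2) := by
  apply hg.div
  · exact Real.continuous_sqrt.comp (by continuity)
  · exact fun θ => ne_of_gt (Real.sqrt_pos.2 (denom_pos hm0 hm1 θ))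

lemma Beval {m : ℝ} (hm : m ∈ Ioo (0:ℝ) 1) :
    ∫ θ in (0:ℝ)..(π/2), Real.sin θ / Real.sqrt (1 - m * Real.sin θ ^ 2)
      = (Real.sqrt m)⁻¹ * (Real.log (1 + Real.sqrt m) - Real.log (Real.sqrt (1 - m))) := by
  obtain ⟨hm0, hm1⟩ := hm
  have hsm : 0 < Real.sqrt m := Real.sqrt_pos.2 hm0
  have hmm : Real.sqrt m * Real.sqrt m = m := Real.mul_self_sqrt hm0.le
  set F : ℝ → ℝ := fun θ => -(Real.sqrt m)⁻¹ *
      Real.log (Real.sqrt m * Real.cos θ + Real.sqrt (1 - m * Real.sin θ ^ 2)) with hF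
  have hderiv : ∀ θ ∈ Set.uIcc (0:ℝ) (π/2),
      HasDerivAt F (Real.sin θ / Real.sqrt (1 - m * Real.sin θ ^ 2)) θ := by
    intro θ hθ
    rw [Set.uIcc_of_le (by positivity)] at hθ
    have hcos : 0 ≤ Real.cos θ :=
      Real.cos_nonneg_of_mem_Icc ⟨by linarith [hθ.1, pi_pos], hθ.2⟩
    have hvpos : 0 < 1 - m * Real.sin θ ^ 2 := denom_pos hm0.le hm1 θ
    have hsv : 0 < Real.sqrt (1 - m * Real.sin θ ^ 2) := Real.sqrt_pos.2 hvpos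
    have hvv : Real.sqrt (1 - m * Real.sin θ ^ 2) * Real.sqrt (1 - m * Real.sin θ ^ 2)
        = 1 - m * Real.sin θ ^ 2 := Real.mul_self_sqrt hvpos.le
    have hwpos : 0 < Real.sqrt m * Real.cos θ + Real.sqrt (1 - m * Real.sin θ ^ 2) := by
      positivity
    have hv : HasDerivAt (fun θ => 1 - m * Real.sin θ ^ 2)
        (-(m * ((2:ℕ) * Real.sin θ ^ 1 * Real.cos θ))) θ :=
      (((Real.hasDerivAt_sin θ).pow 2).const_mul m).const_sub 1
    have hsq : HasDerivAt (fun θ => Real.sqrt (1 - m * Real.sin θ ^ 2))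
        ((-(m * ((2:ℕ) * Real.sin θ ^ 1 * Real.cos θ))) /
          (2 * Real.sqrt (1 - m * Real.sin θ ^ 2))) θ :=
      hv.sqrt (ne_of_gt hvpos)
    have hw : HasDerivAt
        (fun θ => Real.sqrt m * Real.cos θ + Real.sqrt (1 - m * Real.sin θ ^ 2))
        (Real.sqrt m * (-Real.sin θ) + (-(m * ((2:ℕ) * Real.sin θ ^ 1 * Real.cos θ))) /
          (2 * Real.sqrt (1 - m * Real.sin θ ^ 2))) θ :=
      ((Real.hasDerivAt_cos θ).const_mul (Real.sqrt m)).add hsq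
    have hlog := (hw.log (ne_of_gt hwpos)).const_mul (-(Real.sqrt m)⁻¹)
    refine hlog.congr_deriv ?_
    have hnum : Real.sqrt m * (-Real.sin θ) + (-(m * ((2:ℕ) * Real.sin θ ^ 1 * Real.cos θ))) /
        (2 * Real.sqrt (1 - m * Real.sin θ ^ 2)) = -(Real.sqrt m * Real.sin θ) *
        (Real.sqrt m * Real.cos θ + Real.sqrt (1 - m * Real.sin θ ^ 2)) / Real.sqrt (1 - m * Real.sin θ ^ 2) := by
      generalize Real.sqrt (1 - m * Real.sin θ ^ 2) = V at hsv ⊢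
      push_cast
      field_simp
      ring_nf
      linear_combination (Real.sin θ * Real.cos θ) * hmm
    rw [hnum]
    generalize Real.sqrt (1 - m * Real.sin θ ^ 2) = V at hsv hwpos ⊢
    field_simp
  have key := intervalIntegral.integral_eq_sub_of_hasDerivAt hderiv
    ((cont_div hm0.le hm1 Real.continuous_sin).intervalIntegrable 0 (π/2))
  rw [key, hF]
  simp only [Real.cos_pi_div_two, Real.sin_pi_div_two, Real.cos_zero, Real.sin_zero]
  ring_nf
  rw [Real.sqrt_one]
  ring_nf

lemma Ksplit {m : ℝ} (hm : m ∈ Ioo (0:ℝ) 1) :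
    ellK m = (∫ θ in (0:ℝ)..(π/2), (1 - Real.sin θ) / Real.sqrt (1 - m * Real.sin θ ^ 2))
      + ∫ θ in (0:ℝ)..(π/2), Real.sin θ / Real.sqrt (1 - m * Real.sin θ ^ 2) := by
  rw [ellK, ← intervalIntegral.integral_add
    ((cont_div hm.1.le hm.2 (by continuity)).intervalIntegrable 0 (π/2))
    ((cont_div hm.1.le hm.2 Real.continuous_sin).intervalIntegrable 0 (π/2))]
  congr 1
  ext θ
  rw [← add_div, sub_add_cancel]

lemma limit_integral_eval :
    ∫ θ in (0:ℝ)..(π/2), Real.cos θ / (1 + Real.sin θ) = Real.log 2 := by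
  have hderiv : ∀ θ ∈ Set.uIcc (0:ℝ) (π/2),
      HasDerivAt (fun θ => Real.log (1 + Real.sin θ))
        (Real.cos θ / (1 + Real.sin θ)) θ := by
    intro θ hθ
    rw [Set.uIcc_of_le (by positivity)] at hθ
    have hs : 0 ≤ Real.sin θ := Real.sin_nonneg_of_nonneg_of_le_pi hθ.1
      (by linarith [hθ.2, pi_pos])
    have hpos : 0 < 1 + Real.sin θ := by linarith
    have h1 : HasDerivAt (fun θ => 1 + Real.sin θ) (Real.cos θ) θ := by
      simpa using (Real.hasDerivAt_sin θ).const_add 1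
    exact h1.log (ne_of_gt hpos)
  have key := intervalIntegral.integral_eq_sub_of_hasDerivAt hderiv ?_
  · rw [key]
    norm_num
  · apply ContinuousOn.intervalIntegrable
    apply ContinuousOn.div Real.continuous_cos.continuousOn (by fun_prop)
    intro θ hθ
    rw [Set.uIcc_of_le (by positivity)] at hθ
    have hs : 0 ≤ Real.sin θ := Real.sin_nonneg_of_nonneg_of_le_pi hθ.1
      (by linarith [hθ.2, pi_pos])
    positivity

lemma tendstoA :
    Tendsto (fun m => ∫ θ in (0:ℝ)..(π/2),
        (1 - Real.sin θ) / Real.sqrt (1 - m * Real.sin θ ^ 2))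
      (nhdsWithin 1 (Set.Iio 1)) (nhds (Real.log 2)) := by
  have hle : (0:ℝ) ≤ π/2 := by positivity
  have hIoo : Set.Ioo (0:ℝ) 1 ∈ nhdsWithin (1:ℝ) (Set.Iio 1) :=
    Ioo_mem_nhdsLT_of_mem (by norm_num)
  have hlim2 : (Real.log 2) = ∫ θ in Set.Ioc (0:ℝ) (π/2), Real.cos θ / (1 + Real.sin θ) := by
    rw [← limit_integral_eval, intervalIntegral.integral_of_le hle]
  rw [hlim2]
  have := MeasureTheory.tendsto_integral_filter_of_dominated_convergence
    (μ := volume.restrict (Set.Ioc (0:ℝ) (π/2)))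
    (F := fun m θ => (1 - Real.sin θ) / Real.sqrt (1 - m * Real.sin θ ^ 2))
    (f := fun θ => Real.cos θ / (1 + Real.sin θ))
    (bound := fun _ => 1)
    (l := nhdsWithin 1 (Set.Iio 1)) ?_ ?_ ?_ ?_
  · refine this.congr fun m => ?_
    rw [intervalIntegral.integral_of_le hle]
  · filter_upwards [hIoo] with m hm
    exact (cont_div hm.1.le hm.2 (by continuity)).aestronglyMeasurable.restrict
  · filter_upwards [hIoo] with m hm
    rw [MeasureTheory.ae_restrict_iff' measurableSet_Ioc]
    refine MeasureTheory.ae_of_all _ fun θ hθ => ?_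
    have hs0 : 0 ≤ Real.sin θ := Real.sin_nonneg_of_nonneg_of_le_pi hθ.1.le
      (by linarith [hθ.2, pi_pos])
    have hs1 : Real.sin θ ≤ 1 := Real.sin_le_one θ
    have hvpos : 0 < 1 - m * Real.sin θ ^ 2 := denom_pos hm.1.le hm.2 θ
    have hsv : 0 < Real.sqrt (1 - m * Real.sin θ ^ 2) := Real.sqrt_pos.2 hvpos
    rw [Real.norm_eq_abs, abs_of_nonneg (div_nonneg (by linarith) hsv.le)]
    rw [div_le_one hsv]
    have h1 : 1 - Real.sin θ = Real.sqrt ((1 - Real.sin θ)^2) := by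
      rw [Real.sqrt_sq (by linarith)]
    rw [h1]
    apply Real.sqrt_le_sqrt
    nlinarith [hm.2.le, hm.1.le, sq_nonneg (Real.sin θ)]
  · exact MeasureTheory.integrable_const 1
  · rw [MeasureTheory.ae_restrict_iff' measurableSet_Ioc]
    refine MeasureTheory.ae_of_all _ fun θ hθ => ?_
    have hs0 : 0 ≤ Real.sin θ := Real.sin_nonneg_of_nonneg_of_le_pi hθ.1.le
      (by linarith [hθ.2, pi_pos])
    by_cases hone : Real.sin θ = 1
    · have hcos : Real.cos θ = 0 := by
        nlinarith [Real.sin_sq_add_cos_sq θ, sq_abs (Real.cos θ), abs_nonneg (Real.cos θ)]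
      simp [hone, hcos]
    · have hs1 : Real.sin θ < 1 := lt_of_le_of_ne (Real.sin_le_one θ) hone
      have hcos : 0 < Real.cos θ := by
        have hθ2 : θ < π/2 := by
          by_contra h
          push_neg at h
          have h2 : θ = π/2 := le_antisymm hθ.2 h
          rw [h2, Real.sin_pi_div_two] at hone
          exact hone rfl
        exact Real.cos_pos_of_mem_Ioo ⟨by linarith [hθ.1, pi_pos], hθ2⟩
      have hclim : ContinuousAt
          (fun m : ℝ => (1 - Real.sin θ) / Real.sqrt (1 - m * Real.sin θ ^ 2)) 1 := by
        apply ContinuousAt.div continuousAt_const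
        · exact Real.continuous_sqrt.continuousAt.comp (by fun_prop)
        · have : 0 < 1 - 1 * Real.sin θ ^ 2 := by nlinarith
          exact ne_of_gt (Real.sqrt_pos.2 this)
      have hval : (1 - Real.sin θ) / Real.sqrt (1 - 1 * Real.sin θ ^ 2)
          = Real.cos θ / (1 + Real.sin θ) := by
        have h1 : 1 - 1 * Real.sin θ ^ 2 = Real.cos θ ^ 2 := by
          nlinarith [Real.sin_sq_add_cos_sq θ]
        rw [h1, Real.sqrt_sq hcos.le]
        rw [div_eq_div_iff (by positivity) (by positivity)]
        nlinarith [Real.sin_sq_add_cos_sq θ]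
      have := hclim.tendsto
      rw [hval] at this
      exact this.mono_left nhdsWithin_le_nhds

lemma tendstoB :
    Tendsto (fun m : ℝ => (Real.sqrt m)⁻¹ * Real.log (1 + Real.sqrt m))
      (nhdsWithin 1 (Set.Iio 1)) (nhds (Real.log 2)) := by
  have hc : ContinuousAt (fun m : ℝ => (Real.sqrt m)⁻¹ * Real.log (1 + Real.sqrt m)) 1 := by
    apply ContinuousAt.mul
    · apply ContinuousAt.inv₀ Real.continuous_sqrt.continuousAt
      rw [Real.sqrt_one]; norm_num
    · apply ContinuousAt.log (by fun_prop)
      rw [Real.sqrt_one]; norm_num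
  have := hc.tendsto.mono_left (nhdsWithin_le_nhds (s := Set.Iio 1))
  simpa [Real.sqrt_one, show (1:ℝ)+1 = 2 by norm_num] using this

lemma tendstoC :
    Tendsto (fun m : ℝ => (1 - (Real.sqrt m)⁻¹) * Real.log (Real.sqrt (1 - m)))
      (nhdsWithin 1 (Set.Iio 1)) (nhds 0) := by
  have hIoo : Set.Ioo (0:ℝ) 1 ∈ nhdsWithin (1:ℝ) (Set.Iio 1) :=
    Ioo_mem_nhdsLT_of_mem (by norm_num)
  have hEq : ∀ m ∈ Set.Ioo (0:ℝ) 1,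
      (1 - (Real.sqrt m)⁻¹) * Real.log (Real.sqrt (1 - m))
        = (-(2 * Real.sqrt m * (Real.sqrt m + 1))⁻¹) * (Real.log (1 - m) * (1 - m)) := by
    intro m hm
    have hsm : 0 < Real.sqrt m := Real.sqrt_pos.2 hm.1
    have hmm : Real.sqrt m * Real.sqrt m = m := Real.mul_self_sqrt hm.1.le
    have h1m : (0:ℝ) < 1 - m := by linarith [hm.2]
    rw [Real.log_sqrt h1m.le]
    field_simp
    ring_nf
    linear_combination (Real.log (1-m)) * hmm
  have hmul : Tendsto (fun m : ℝ =>
      (-(2 * Real.sqrt m * (Real.sqrt m + 1))⁻¹) * (Real.log (1 - m) * (1 - m)))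
      (nhdsWithin 1 (Set.Iio 1)) (nhds ((-(2 * 1 * (1 + 1))⁻¹) * 0)) := by
    apply Tendsto.mul
    · have hc : ContinuousAt (fun m : ℝ => -(2 * Real.sqrt m * (Real.sqrt m + 1))⁻¹) 1 := by
        apply ContinuousAt.neg
        apply ContinuousAt.inv₀ (by fun_prop)
        rw [Real.sqrt_one]; norm_num
      have := hc.tendsto.mono_left (nhdsWithin_le_nhds (s := Set.Iio 1))
      simpa [Real.sqrt_one] using this
    · have hx : Tendsto (fun x : ℝ => Real.log x * x) (nhdsWithin 0 (Set.Ioi 0)) (nhds 0) := by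
        simpa using _root_.tendsto_log_mul_rpow_nhdsGT_zero (r := 1) one_pos
      apply hx.comp
      rw [tendsto_nhdsWithin_iff]
      constructor
      · have : ContinuousAt (fun m : ℝ => 1 - m) 1 := by fun_prop
        have h2 := this.tendsto.mono_left (nhdsWithin_le_nhds (s := Set.Iio 1))
        simpa using h2
      · filter_upwards [self_mem_nhdsWithin] with m hm
        simp only [Set.mem_Iio] at hm
        simp [Set.mem_Ioi]; linarith
  have : ((-(2 * 1 * (1 + 1))⁻¹ : ℝ)) * 0 = 0 := by ring
  rw [this] at hmul
  exact hmul.congr' (by filter_upwards [hIoo] with m hm; rw [hEq m hm])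

/-- **Logarithmic divergence of `K(m)` as `m → 1⁻`:**
`K(m) = -log √(1-m) + log 4 + o(1)`, i.e. `K(m) + log √(1-m) → log 4`. -/
theorem ellK_log_asymptotic :
    Filter.Tendsto (fun m => ellK m + Real.log (Real.sqrt (1 - m)))
      (nhdsWithin 1 (Set.Iio 1)) (nhds (Real.log 4)) := by
  have hIoo : Set.Ioo (0:ℝ) 1 ∈ nhdsWithin (1:ℝ) (Set.Iio 1) :=
    Ioo_mem_nhdsLT_of_mem (by norm_num)
  have hsum : Tendsto (fun m : ℝ =>
      (∫ θ in (0:ℝ)..(π/2), (1 - Real.sin θ) / Real.sqrt (1 - m * Real.sin θ ^ 2))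
      + (Real.sqrt m)⁻¹ * Real.log (1 + Real.sqrt m)
      + (1 - (Real.sqrt m)⁻¹) * Real.log (Real.sqrt (1 - m)))
      (nhdsWithin 1 (Set.Iio 1)) (nhds (Real.log 2 + Real.log 2 + 0)) :=
    (tendstoA.add tendstoB).add tendstoC
  have hlog4 : Real.log 2 + Real.log 2 + 0 = Real.log 4 := by
    rw [add_zero, ← Real.log_mul (by norm_num) (by norm_num)]
    norm_num
  rw [hlog4] at hsum
  refine hsum.congr' ?_
  filter_upwards [hIoo] with m hm
  have hsm : Real.sqrt m ≠ 0 := ne_of_gt (Real.sqrt_pos.2 hm.1)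
  rw [Ksplit hm, Beval hm]
  ring
end
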